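/- On the domain {(x,y₁,y₂) ∈ ℝ³ : y₂ < y₁ < x} define Λ(x,y₁,y₂) = ( 2x(y₁ + y₂ − 2x) + 3(y₁−y₂)² log(y₁−y₂) ) / ( 6 (x−y₁)^{1/2}(x−y₂)^{1/2}(y₁−y₂)^{5/4} ), F(x,y₁,y₂) = (y₁ + y₂ − 2x)/((x−y₁)^{1/2}(x−y₂)^{1/2}(y₁−y₂)^{5/4}) and Z(x,y₁,y₂) = (y₁−y₂)^{3/4}/((x−y₁)^{1/2}(x−y₂)^{1/2}). Then: (i) (x ∂/∂x + y₁ ∂/∂y₁ + y₂ ∂/∂y₂ + 5/4 − 1) Λ = (1/2) Z; and (ii) (∂/∂x + ∂/∂y₁ + ∂/∂y₂) Λ = (1/3) F. That is, (L₀ − 1)Λ = L₋₁F forms an L₀ Jordan block and the logarithmic coupling is β̃ = 1/3, namely L₁Λ = (1/3)F. -/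

import Mathlib

/-- The logarithmic partner `Λ` for the SLE₆(ρ₁=-3, ρ₂=-3) staggered module. -/
noncomputable def Λ19 (x y₁ y₂ : ℝ) : ℝ :=
  (2 * x * (y₁ + y₂ - 2 * x) + 3 * (y₁ - y₂) ^ 2 * Real.log (y₁ - y₂))
    / (6 * (x - y₁) ^ ((1 : ℝ) / 2) * (x - y₂) ^ ((1 : ℝ) / 2)
        * (y₁ - y₂) ^ ((5 : ℝ) / 4))

/-- The highest weight vector `F` of weight `0`. -/
noncomputable def F19 (x y₁ y₂ : ℝ) : ℝ :=
  (y₁ + y₂ - 2 * x)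
    / ((x - y₁) ^ ((1 : ℝ) / 2) * (x - y₂) ^ ((1 : ℝ) / 2) * (y₁ - y₂) ^ ((5 : ℝ) / 4))

/-- The SLE₆(ρ₁=-3, ρ₂=-3) partition function. -/
noncomputable def Z19 (x y₁ y₂ : ℝ) : ℝ :=
  (y₁ - y₂) ^ ((3 : ℝ) / 4) / ((x - y₁) ^ ((1 : ℝ) / 2) * (x - y₂) ^ ((1 : ℝ) / 2))

lemma pr19 (t : ℝ) (ht : 0 < t) (n : ℕ) (p : ℝ) (m : ℕ) (h : (n:ℝ) * p = m) :
    (t ^ n) ^ p = t ^ m := by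
  rw [← Real.rpow_natCast t n, ← Real.rpow_mul ht.le, h, Real.rpow_natCast]

/-- `(L₀ - 1) Λ = (1/2) Z = L₋₁ F` forms an `L₀` Jordan block and
`L₁ Λ = (1/3) F`, i.e. the logarithmic coupling is `β̃ = 1/3`. -/
theorem stmt_19 :
    ∀ x y₁ y₂ : ℝ, y₂ < y₁ → y₁ < x →
      (x * deriv (fun x' => Λ19 x' y₁ y₂) x + y₁ * deriv (fun y₁' => Λ19 x y₁' y₂) y₁
          + y₂ * deriv (fun y₂' => Λ19 x y₁ y₂') y₂ + (5 / 4 - 1) * Λ19 x y₁ y₂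
          = 1 / 2 * Z19 x y₁ y₂)
      ∧ (deriv (fun x' => Λ19 x' y₁ y₂) x + deriv (fun y₁' => Λ19 x y₁' y₂) y₁
          + deriv (fun y₂' => Λ19 x y₁ y₂') y₂ = 1 / 3 * F19 x y₁ y₂) := by
  intro x y₁ y₂ h21 h1x
  have ha : (0:ℝ) < x - y₁ := by linarith
  have hb : (0:ℝ) < x - y₂ := by linarith
  have hd : (0:ℝ) < y₁ - y₂ := by linarith
  have hD0 : (6 * (x - y₁) ^ ((1:ℝ)/2) * (x - y₂) ^ ((1:ℝ)/2) * (y₁ - y₂) ^ ((5:ℝ)/4)) ≠ 0 := by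
    positivity
  -- x derivative
  have hu : HasDerivAt (fun x' : ℝ => (x' - y₁) ^ ((1:ℝ)/2))
      (1/2 * (x - y₁) ^ ((1:ℝ)/2 - 1)) x := by
    simpa using ((hasDerivAt_id x).sub_const y₁).rpow_const (Or.inl ha.ne')
  have hv : HasDerivAt (fun x' : ℝ => (x' - y₂) ^ ((1:ℝ)/2))
      (1/2 * (x - y₂) ^ ((1:ℝ)/2 - 1)) x := by
    simpa using ((hasDerivAt_id x).sub_const y₂).rpow_const (Or.inl hb.ne')
  have hNx : HasDerivAt
      (fun x' : ℝ => 2 * x' * (y₁ + y₂ - 2 * x') + 3 * (y₁ - y₂) ^ 2 * Real.log (y₁ - y₂))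
      (2 * (y₁ + y₂ - 2 * x) + 2 * x * (-2)) x := by
    have h1 : HasDerivAt (fun x' : ℝ => 2 * x') 2 x := by
      simpa using (hasDerivAt_id x).const_mul (2:ℝ)
    have h2 : HasDerivAt (fun x' : ℝ => y₁ + y₂ - 2 * x') (-2 : ℝ) x := by
      simpa using ((hasDerivAt_id x).const_mul (2:ℝ)).const_sub (y₁ + y₂)
    simpa using (h1.mul h2).add_const (3 * (y₁ - y₂) ^ 2 * Real.log (y₁ - y₂))
  have hDx : HasDerivAt
      (fun x' : ℝ => 6 * (x' - y₁) ^ ((1:ℝ)/2) * (x' - y₂) ^ ((1:ℝ)/2) * (y₁ - y₂) ^ ((5:ℝ)/4))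
      ((6 * (1/2 * (x - y₁) ^ ((1:ℝ)/2 - 1)) * (x - y₂) ^ ((1:ℝ)/2)
        + 6 * (x - y₁) ^ ((1:ℝ)/2) * (1/2 * (x - y₂) ^ ((1:ℝ)/2 - 1))) * (y₁ - y₂) ^ ((5:ℝ)/4)) x :=
    ((hu.const_mul 6).mul hv).mul_const _
  have e1 : deriv (fun x' => Λ19 x' y₁ y₂) x =
      ((2 * (y₁ + y₂ - 2 * x) + 2 * x * (-2)) *
          (6 * (x - y₁) ^ ((1:ℝ)/2) * (x - y₂) ^ ((1:ℝ)/2) * (y₁ - y₂) ^ ((5:ℝ)/4))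
        - (2 * x * (y₁ + y₂ - 2 * x) + 3 * (y₁ - y₂) ^ 2 * Real.log (y₁ - y₂)) *
          ((6 * (1/2 * (x - y₁) ^ ((1:ℝ)/2 - 1)) * (x - y₂) ^ ((1:ℝ)/2)
            + 6 * (x - y₁) ^ ((1:ℝ)/2) * (1/2 * (x - y₂) ^ ((1:ℝ)/2 - 1))) * (y₁ - y₂) ^ ((5:ℝ)/4)))
        / (6 * (x - y₁) ^ ((1:ℝ)/2) * (x - y₂) ^ ((1:ℝ)/2) * (y₁ - y₂) ^ ((5:ℝ)/4)) ^ 2 :=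
    (hNx.div hDx hD0).deriv
  -- y₁ derivative
  have hu1 : HasDerivAt (fun t : ℝ => (x - t) ^ ((1:ℝ)/2))
      (-(1/2 * (x - y₁) ^ ((1:ℝ)/2 - 1))) y₁ := by
    have := ((hasDerivAt_id y₁).const_sub x).rpow_const (p := (1:ℝ)/2) (Or.inl ha.ne')
    simp only [id_eq] at this
    convert this using 1; ring
  have hw1 : HasDerivAt (fun t : ℝ => (t - y₂) ^ ((5:ℝ)/4))
      (5/4 * (y₁ - y₂) ^ ((5:ℝ)/4 - 1)) y₁ := by
    simpa using ((hasDerivAt_id y₁).sub_const y₂).rpow_const (p := (5:ℝ)/4) (Or.inl hd.ne')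
  have hN1 : HasDerivAt
      (fun t : ℝ => 2 * x * (t + y₂ - 2 * x) + 3 * (t - y₂) ^ 2 * Real.log (t - y₂))
      (2 * x + (3 * (2 * (y₁ - y₂)) * Real.log (y₁ - y₂) + 3 * (y₁ - y₂) ^ 2 * (1 / (y₁ - y₂)))) y₁ := by
    have h1 : HasDerivAt (fun t : ℝ => 2 * x * (t + y₂ - 2 * x)) (2 * x) y₁ := by
      simpa using (((hasDerivAt_id y₁).add_const y₂).sub_const (2 * x)).const_mul (2 * x)
    have h2 : HasDerivAt (fun t : ℝ => (t - y₂) ^ 2) (2 * (y₁ - y₂)) y₁ := by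
      simpa using ((hasDerivAt_id y₁).sub_const y₂).fun_pow 2
    have h3 : HasDerivAt (fun t : ℝ => Real.log (t - y₂)) (1 / (y₁ - y₂)) y₁ := by
      simpa using ((hasDerivAt_id y₁).sub_const y₂).log hd.ne'
    exact h1.add ((h2.const_mul 3).mul h3)
  have hD1 : HasDerivAt
      (fun t : ℝ => 6 * (x - t) ^ ((1:ℝ)/2) * (x - y₂) ^ ((1:ℝ)/2) * (t - y₂) ^ ((5:ℝ)/4))
      ((6 * (-(1/2 * (x - y₁) ^ ((1:ℝ)/2 - 1))) * (x - y₂) ^ ((1:ℝ)/2)) * (y₁ - y₂) ^ ((5:ℝ)/4)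
        + 6 * (x - y₁) ^ ((1:ℝ)/2) * (x - y₂) ^ ((1:ℝ)/2) * (5/4 * (y₁ - y₂) ^ ((5:ℝ)/4 - 1))) y₁ :=
    ((hu1.const_mul 6).mul_const ((x - y₂) ^ ((1:ℝ)/2))).mul hw1
  have e2 : deriv (fun y₁' => Λ19 x y₁' y₂) y₁ =
      ((2 * x + (3 * (2 * (y₁ - y₂)) * Real.log (y₁ - y₂) + 3 * (y₁ - y₂) ^ 2 * (1 / (y₁ - y₂)))) *
          (6 * (x - y₁) ^ ((1:ℝ)/2) * (x - y₂) ^ ((1:ℝ)/2) * (y₁ - y₂) ^ ((5:ℝ)/4))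
        - (2 * x * (y₁ + y₂ - 2 * x) + 3 * (y₁ - y₂) ^ 2 * Real.log (y₁ - y₂)) *
          ((6 * (-(1/2 * (x - y₁) ^ ((1:ℝ)/2 - 1))) * (x - y₂) ^ ((1:ℝ)/2)) * (y₁ - y₂) ^ ((5:ℝ)/4)
            + 6 * (x - y₁) ^ ((1:ℝ)/2) * (x - y₂) ^ ((1:ℝ)/2) * (5/4 * (y₁ - y₂) ^ ((5:ℝ)/4 - 1))))
        / (6 * (x - y₁) ^ ((1:ℝ)/2) * (x - y₂) ^ ((1:ℝ)/2) * (y₁ - y₂) ^ ((5:ℝ)/4)) ^ 2 :=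
    (hN1.div hD1 hD0).deriv
  -- y₂ derivative
  have hv2 : HasDerivAt (fun t : ℝ => (x - t) ^ ((1:ℝ)/2))
      (-(1/2 * (x - y₂) ^ ((1:ℝ)/2 - 1))) y₂ := by
    have := ((hasDerivAt_id y₂).const_sub x).rpow_const (p := (1:ℝ)/2) (Or.inl hb.ne')
    simp only [id_eq] at this
    convert this using 1; ring
  have hw2 : HasDerivAt (fun t : ℝ => (y₁ - t) ^ ((5:ℝ)/4))
      (-(5/4 * (y₁ - y₂) ^ ((5:ℝ)/4 - 1))) y₂ := by
    have := ((hasDerivAt_id y₂).const_sub y₁).rpow_const (p := (5:ℝ)/4) (Or.inl hd.ne')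
    simp only [id_eq] at this
    convert this using 1; ring
  have hN2 : HasDerivAt
      (fun t : ℝ => 2 * x * (y₁ + t - 2 * x) + 3 * (y₁ - t) ^ 2 * Real.log (y₁ - t))
      (2 * x + (3 * (-(2 * (y₁ - y₂))) * Real.log (y₁ - y₂) + 3 * (y₁ - y₂) ^ 2 * (-(1 / (y₁ - y₂))))) y₂ := by
    have h1 : HasDerivAt (fun t : ℝ => 2 * x * (y₁ + t - 2 * x)) (2 * x) y₂ := by
      simpa using (((hasDerivAt_id y₂).const_add y₁).sub_const (2 * x)).const_mul (2 * x)
    have h2 : HasDerivAt (fun t : ℝ => (y₁ - t) ^ 2) (-(2 * (y₁ - y₂))) y₂ := by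
      have := ((hasDerivAt_id y₂).const_sub y₁).fun_pow 2
      simp only [id_eq] at this
      exact this.congr_deriv (by norm_num)
    have h3 : HasDerivAt (fun t : ℝ => Real.log (y₁ - t)) (-(1 / (y₁ - y₂))) y₂ := by
      have := ((hasDerivAt_id y₂).const_sub y₁).log hd.ne'
      simp only [id_eq] at this
      convert this using 1; ring
    exact h1.add ((h2.const_mul 3).mul h3)
  have hD2 : HasDerivAt
      (fun t : ℝ => 6 * (x - y₁) ^ ((1:ℝ)/2) * (x - t) ^ ((1:ℝ)/2) * (y₁ - t) ^ ((5:ℝ)/4))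
      ((6 * (x - y₁) ^ ((1:ℝ)/2) * (-(1/2 * (x - y₂) ^ ((1:ℝ)/2 - 1)))) * (y₁ - y₂) ^ ((5:ℝ)/4)
        + 6 * (x - y₁) ^ ((1:ℝ)/2) * (x - y₂) ^ ((1:ℝ)/2) * (-(5/4 * (y₁ - y₂) ^ ((5:ℝ)/4 - 1)))) y₂ :=
    (hv2.const_mul (6 * (x - y₁) ^ ((1:ℝ)/2))).mul hw2
  have e3 : deriv (fun y₂' => Λ19 x y₁ y₂') y₂ =
      ((2 * x + (3 * (-(2 * (y₁ - y₂))) * Real.log (y₁ - y₂) + 3 * (y₁ - y₂) ^ 2 * (-(1 / (y₁ - y₂))))) *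
          (6 * (x - y₁) ^ ((1:ℝ)/2) * (x - y₂) ^ ((1:ℝ)/2) * (y₁ - y₂) ^ ((5:ℝ)/4))
        - (2 * x * (y₁ + y₂ - 2 * x) + 3 * (y₁ - y₂) ^ 2 * Real.log (y₁ - y₂)) *
          ((6 * (x - y₁) ^ ((1:ℝ)/2) * (-(1/2 * (x - y₂) ^ ((1:ℝ)/2 - 1)))) * (y₁ - y₂) ^ ((5:ℝ)/4)
            + 6 * (x - y₁) ^ ((1:ℝ)/2) * (x - y₂) ^ ((1:ℝ)/2) * (-(5/4 * (y₁ - y₂) ^ ((5:ℝ)/4 - 1)))))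
        / (6 * (x - y₁) ^ ((1:ℝ)/2) * (x - y₂) ^ ((1:ℝ)/2) * (y₁ - y₂) ^ ((5:ℝ)/4)) ^ 2 :=
    (hN2.div hD2 hD0).deriv
  rw [e1, e2, e3]
  clear e1 e2 e3 hNx hDx hN1 hD1 hN2 hD2 hu hv hu1 hw1 hv2 hw2 hD0
  simp only [Λ19, Z19, F19]
  obtain ⟨A, hA, rfl⟩ : ∃ A : ℝ, 0 < A ∧ x = y₁ + A ^ 2 :=
    ⟨Real.sqrt (x - y₁), Real.sqrt_pos.mpr ha, by rw [Real.sq_sqrt ha.le]; ring⟩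
  obtain ⟨E, hE, rfl⟩ : ∃ E : ℝ, 0 < E ∧ y₂ = y₁ - E ^ 4 := by
    refine ⟨(y₁ - y₂) ^ ((1:ℝ)/4), Real.rpow_pos_of_pos hd _, ?_⟩
    have h4 : (((y₁ - y₂) ^ ((1:ℝ)/4)) ^ (4:ℕ) : ℝ) = y₁ - y₂ := by
      rw [← Real.rpow_natCast _ 4, ← Real.rpow_mul hd.le]; norm_num
    rw [h4]; ring
  rw [show y₁ + A ^ 2 - y₁ = A ^ 2 from by ring,
      show y₁ + A ^ 2 - (y₁ - E ^ 4) = A ^ 2 + E ^ 4 from by ring,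
      show y₁ - (y₁ - E ^ 4) = E ^ 4 from by ring]
  have sA : ((A ^ 2 : ℝ)) ^ ((1:ℝ)/2 - 1) = (A ^ 2) ^ ((1:ℝ)/2) / A ^ 2 := by
    rw [Real.rpow_sub (by positivity), Real.rpow_one]
  have sB : ((A ^ 2 + E ^ 4 : ℝ)) ^ ((1:ℝ)/2 - 1)
      = (A ^ 2 + E ^ 4) ^ ((1:ℝ)/2) / (A ^ 2 + E ^ 4) := by
    rw [Real.rpow_sub (by positivity), Real.rpow_one]
  have sE : ((E ^ 4 : ℝ)) ^ ((5:ℝ)/4 - 1) = (E ^ 4) ^ ((5:ℝ)/4) / E ^ 4 := by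
    rw [Real.rpow_sub (by positivity), Real.rpow_one]
  rw [sA, sB, sE,
      pr19 A hA 2 ((1:ℝ)/2) 1 (by norm_num),
      pr19 E hE 4 ((5:ℝ)/4) 5 (by norm_num),
      pr19 E hE 4 ((3:ℝ)/4) 3 (by norm_num)]
  set B : ℝ := (A ^ 2 + E ^ 4) ^ ((1:ℝ)/2) with hBdef
  have hB : 0 < B := Real.rpow_pos_of_pos (by positivity) _
  have hB2 : B ^ 2 = A ^ 2 + E ^ 4 := by
    rw [hBdef, ← Real.rpow_natCast _ 2, ← Real.rpow_mul (by positivity)]; norm_num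
  set L : ℝ := Real.log (E ^ 4) with hL
  constructor
  · field_simp
    ring
  · field_simp
    ring
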